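/- Let ζ ∈ ℂ be a root of unity. Then exactly one of the three numbers −ζ, ζ², −ζ² is Galois conjugate to ζ over ℚ, i.e., is a root of the minimal polynomial of ζ over ℚ. -/

import Mathlib

noncomputable section

open Polynomial

lemma aux_aeval_iff {ζ : ℂ} {n : ℕ} (hn : 0 < n) (h : IsPrimitiveRoot ζ n) (x : ℂ) :
    Polynomial.aeval x (minpoly ℚ ζ) = 0 ↔ IsPrimitiveRoot x n := by
  haveI : NeZero ((n : ℂ)) := ⟨by exact_mod_cast hn.ne'⟩
  rw [← Polynomial.cyclotomic_eq_minpoly_rat h hn, Polynomial.aeval_def,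
    Polynomial.eval₂_eq_eval_map, Polynomial.map_cyclotomic, ← Polynomial.IsRoot.def,
    Polynomial.isRoot_cyclotomic_iff]

lemma trich {ζ : ℂ} {n : ℕ} (hn : 0 < n) (h : IsPrimitiveRoot ζ n) :
    (IsPrimitiveRoot (-ζ) n ∧ ¬IsPrimitiveRoot (ζ ^ 2) n ∧ ¬IsPrimitiveRoot (-ζ ^ 2) n) ∨
    (¬IsPrimitiveRoot (-ζ) n ∧ IsPrimitiveRoot (ζ ^ 2) n ∧ ¬IsPrimitiveRoot (-ζ ^ 2) n) ∨
    (¬IsPrimitiveRoot (-ζ) n ∧ ¬IsPrimitiveRoot (ζ ^ 2) n ∧ IsPrimitiveRoot (-ζ ^ 2) n) := by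
  rcases Nat.even_or_odd n with he | ho
  · -- n even, n = m + m
    obtain ⟨m, rfl⟩ := he
    have hm : 0 < m := by omega
    have hsq : (ζ ^ m) * (ζ ^ m) = 1 := by rw [← pow_add]; exact h.pow_eq_one
    have hne : ζ ^ m ≠ 1 := h.pow_ne_one_of_pos_of_lt hm.ne' (by omega)
    have hhalf : ζ ^ m = -1 := by
      rcases mul_self_eq_one_iff.mp hsq with h1 | h1
      · exact absurd h1 hne
      · exact h1
    have hP2 : ¬IsPrimitiveRoot (ζ ^ 2) (m + m) := by
      intro hp
      have : (ζ ^ 2) ^ m = 1 := by rw [← pow_mul]; rw [show 2 * m = m + m by ring]; exact h.pow_eq_one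
      have hd := hp.dvd_of_pow_eq_one m this
      have := Nat.le_of_dvd hm hd
      omega
    rcases Nat.even_or_odd m with hme | hmo
    · -- 4 ∣ n : -ζ is primitive
      left
      have heq : -ζ = ζ ^ (m + 1) := by rw [pow_succ, hhalf]; ring
      have hcop : Nat.Coprime (m + 1) (m + m) := by
        have h2 : Nat.Coprime (m + 1) 2 :=
          Nat.coprime_comm.mp ((Nat.prime_two.coprime_iff_not_dvd).mpr (by
            rcases hme with ⟨k, hk⟩; rintro ⟨j, hj⟩; omega))
        have hm1 : Nat.Coprime (m + 1) m := by
          rw [show m + 1 = 1 + m by ring, Nat.coprime_add_self_left]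
          exact Nat.coprime_one_left m
        rw [show m + m = 2 * m by ring]
        exact Nat.Coprime.mul_right h2 hm1
      refine ⟨?_, hP2, ?_⟩
      · rw [heq]; exact h.pow_of_coprime (m + 1) hcop
      · intro hp
        have : (-ζ ^ 2) ^ m = 1 := by
          rw [hme.neg_pow, ← pow_mul, show 2 * m = m + m by ring]; exact h.pow_eq_one
        have hd := hp.dvd_of_pow_eq_one m this
        have := Nat.le_of_dvd hm hd
        omega
    · -- n ≡ 2 [MOD 4] : -ζ² is primitive
      right; right
      have heq : -ζ ^ 2 = ζ ^ (m + 2) := by rw [pow_add, hhalf]; ring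
      have hcop : Nat.Coprime (m + 2) (m + m) := by
        have h2 : Nat.Coprime (m + 2) 2 :=
          Nat.coprime_comm.mp ((Nat.prime_two.coprime_iff_not_dvd).mpr (by
            rcases hmo with ⟨k, hk⟩; rintro ⟨j, hj⟩; omega))
        have hm2 : Nat.Coprime (m + 2) m := by
          rw [show m + 2 = 2 + m by ring, Nat.coprime_add_self_left]
          exact Nat.coprime_comm.mp ((Nat.prime_two.coprime_iff_not_dvd).mpr (by
            rcases hmo with ⟨k, hk⟩; rintro ⟨j, hj⟩; omega)) |>.symm
        rw [show m + m = 2 * m by ring]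
        exact Nat.Coprime.mul_right h2 hm2
      refine ⟨?_, hP2, ?_⟩
      · intro hp
        have : (-ζ) ^ m = 1 := by rw [hmo.neg_pow, hhalf]; ring
        have hd := hp.dvd_of_pow_eq_one m this
        have := Nat.le_of_dvd hm hd
        omega
      · rw [heq]; exact h.pow_of_coprime (m + 2) hcop
  · -- n odd : ζ² is primitive
    right; left
    have hcop : Nat.Coprime 2 n := (Nat.prime_two.coprime_iff_not_dvd).mpr (by
      rintro ⟨k, rfl⟩; rcases ho with ⟨j, hj⟩; omega)
    refine ⟨?_, h.pow_of_coprime 2 hcop, ?_⟩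
    · intro hp
      have h1 : (-ζ) ^ n = 1 := hp.pow_eq_one
      rw [ho.neg_pow, h.pow_eq_one] at h1
      exact (by norm_num : (-1 : ℂ) ≠ 1) h1
    · intro hp
      have h1 : (-ζ ^ 2) ^ n = 1 := hp.pow_eq_one
      rw [ho.neg_pow, ← pow_mul, mul_comm, pow_mul, h.pow_eq_one, one_pow] at h1
      exact (by norm_num : (-1 : ℂ) ≠ 1) h1

theorem root_of_unity_conjugate (ζ : ℂ) (hζ : ∃ n : ℕ, 1 ≤ n ∧ ζ ^ n = 1) :
    (Polynomial.aeval (-ζ) (minpoly ℚ ζ) = 0 ∧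
      ¬ Polynomial.aeval (ζ ^ 2) (minpoly ℚ ζ) = 0 ∧
      ¬ Polynomial.aeval (-ζ ^ 2) (minpoly ℚ ζ) = 0) ∨
    (¬ Polynomial.aeval (-ζ) (minpoly ℚ ζ) = 0 ∧
      Polynomial.aeval (ζ ^ 2) (minpoly ℚ ζ) = 0 ∧
      ¬ Polynomial.aeval (-ζ ^ 2) (minpoly ℚ ζ) = 0) ∨
    (¬ Polynomial.aeval (-ζ) (minpoly ℚ ζ) = 0 ∧
      ¬ Polynomial.aeval (ζ ^ 2) (minpoly ℚ ζ) = 0 ∧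
      Polynomial.aeval (-ζ ^ 2) (minpoly ℚ ζ) = 0) := by
  obtain ⟨n, hn1, hpow⟩ := hζ
  have hfin : IsOfFinOrder ζ := isOfFinOrder_iff_pow_eq_one.mpr ⟨n, hn1, hpow⟩
  have hord : 0 < orderOf ζ := hfin.orderOf_pos
  have hprim : IsPrimitiveRoot ζ (orderOf ζ) := IsPrimitiveRoot.orderOf ζ
  simp only [aux_aeval_iff hord hprim]
  exact trich hord hprim
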